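/- Let α, β, γ : ℝ² → ℝ be differentiable. On U = {(t,r,θ,φ) ∈ ℝ⁴ : sin θ ≠ 0} define the vierbein h : U → (4×4 real matrices) with rows h⁰ = (α(t,r), 0, 0, 0), h¹ = (0, β(t,r), 0, 0), h² = (0, 0, γ(t,r), 0), h³ = (0, 0, 0, γ(t,r) sin θ) (i.e., the coframe h¹ = α dt, h² = β dr, h³ = γ dθ, h⁴ = γ sin θ dφ). Let X₁ = (0,0, sin φ, (cos θ/sin θ)cos φ), X₂ = (0,0, −cos φ, (cos θ/sin θ)sin φ), X₃ = (0,0,0,1); let the only nonzero f-components be f₁^1 = cos φ / sin θ, f₂^1 = sin φ / sin θ; and let λ₁, λ₂, λ₃ be the so(3)-representation matrices λ₁ with entries (2,3) = 1, (3,2) = −1; λ₂ with entries (1,2) = −1, (2,1) = 1; λ₃ with entries (1,3) = −1, (3,1) = 1 (all others zero). Then h is a symmetry frame for the SO(3) symmetry group: for all I ∈ {1,2,3}, all a, μ ∈ {0,1,2,3} and all x ∈ U, Σ_ν X_I^ν(x) ∂_ν h^a_μ(x) + Σ_ν ∂_μ X_I^ν(x) h^a_ν(x) = Σ_î f_I^î(x)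 Σ_b (λ_î)^a_b h^b_μ(x). -/

import Mathlib

open Finset

/- Coordinates are `(t, r, θ, φ) = (x 0, x 1, x 2, x 3)`. -/

/-- The μ-th partial derivative of a function on ℝ⁴. -/
noncomputable def pd (f : (Fin 4 → ℝ) → ℝ) (μ : Fin 4) (x : Fin 4 → ℝ) : ℝ :=
  fderiv ℝ f x (Pi.single μ 1)




/-- The SO(3) symmetry vector fields X₁, X₂, X₃. -/
noncomputable def XSO3 : Fin 3 → (Fin 4 → ℝ) → (Fin 4 → ℝ) :=
  ![fun x => ![0, 0, Real.sin (x 3), (Real.cos (x 2) / Real.sin (x 2)) * Real.cos (x 3)],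
    fun x => ![0, 0, -Real.cos (x 3), (Real.cos (x 2) / Real.sin (x 2)) * Real.sin (x 3)],
    fun _ => ![0, 0, 0, 1]]

/-- The functions `f I î`; the only nonzero components are
`f₁¹ = cos φ / sin θ` and `f₂¹ = sin φ / sin θ`. -/
noncomputable def fSO3 : Fin 3 → Fin 3 → (Fin 4 → ℝ) → ℝ :=
  ![![fun x => Real.cos (x 3) / Real.sin (x 2), fun _ => 0, fun _ => 0],
    ![fun x => Real.sin (x 3) / Real.sin (x 2), fun _ => 0, fun _ => 0],
    ![fun _ => 0, fun _ => 0, fun _ => 0]]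

/-- The so(3)-representation matrices λ₁, λ₂, λ₃. -/
def lamSO3 : Fin 3 → Fin 4 → Fin 4 → ℝ :=
  ![![![0, 0, 0, 0], ![0, 0, 0, 0], ![0, 0, 0, 1], ![0, 0, -1, 0]],
    ![![0, 0, 0, 0], ![0, 0, -1, 0], ![0, 1, 0, 0], ![0, 0, 0, 0]],
    ![![0, 0, 0, 0], ![0, 0, 0, -1], ![0, 0, 0, 0], ![0, 1, 0, 0]]]

/-- The spherically symmetric vierbein `h¹ = α dt`, `h² = β dr`, `h³ = γ dθ`,
`h⁴ = γ sin θ dφ`, as a matrix field `h x a μ`. -/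
noncomputable def hSO3 (α β γ : ℝ × ℝ → ℝ) (x : Fin 4 → ℝ) : Fin 4 → Fin 4 → ℝ :=
  ![![α (x 0, x 1), 0, 0, 0],
    ![0, β (x 0, x 1), 0, 0],
    ![0, 0, γ (x 0, x 1), 0],
    ![0, 0, 0, γ (x 0, x 1) * Real.sin (x 2)]]

noncomputable def L01 : (Fin 4 → ℝ) →L[ℝ] ℝ × ℝ :=
  (ContinuousLinearMap.proj 0).prod (ContinuousLinearMap.proj 1)

lemma hasFproj (i : Fin 4) (x : Fin 4 → ℝ) :
    HasFDerivAt (fun y : Fin 4 → ℝ => y i)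
      (ContinuousLinearMap.proj i : (Fin 4 → ℝ) →L[ℝ] ℝ) x :=
  (ContinuousLinearMap.proj i : (Fin 4 → ℝ) →L[ℝ] ℝ).hasFDerivAt

lemma pd_const (c : ℝ) (μ : Fin 4) (x : Fin 4 → ℝ) : pd (fun _ => c) μ x = 0 := by
  simp [pd]

lemma hasF01 (F : ℝ × ℝ → ℝ) (hF : Differentiable ℝ F) (x : Fin 4 → ℝ) :
    HasFDerivAt (fun y : Fin 4 → ℝ => F (y 0, y 1)) ((fderiv ℝ F (x 0, x 1)).comp L01) x :=
  (hF (x 0, x 1)).hasFDerivAt.comp x L01.hasFDerivAt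

lemma pd01 (F : ℝ × ℝ → ℝ) (hF : Differentiable ℝ F) (μ : Fin 4) (x : Fin 4 → ℝ) :
    pd (fun y => F (y 0, y 1)) μ x
      = fderiv ℝ F (x 0, x 1) ((Pi.single μ 1 : Fin 4 → ℝ) 0, (Pi.single μ 1 : Fin 4 → ℝ) 1) := by
  rw [pd, (hasF01 F hF x).fderiv]; rfl

lemma hasFsin2 (x : Fin 4 → ℝ) :
    HasFDerivAt (fun y : Fin 4 → ℝ => Real.sin (y 2))
      (Real.cos (x 2) • (ContinuousLinearMap.proj 2 : (Fin 4 → ℝ) →L[ℝ] ℝ)) x :=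
  by have := (Real.hasDerivAt_sin (x 2)).comp_hasFDerivAt x (hasFproj 2 x); exact this

lemma pd_gsin (F : ℝ × ℝ → ℝ) (hF : Differentiable ℝ F) (μ : Fin 4) (x : Fin 4 → ℝ) :
    pd (fun y => F (y 0, y 1) * Real.sin (y 2)) μ x
      = fderiv ℝ F (x 0, x 1) ((Pi.single μ 1 : Fin 4 → ℝ) 0, (Pi.single μ 1 : Fin 4 → ℝ) 1) * Real.sin (x 2)
        + F (x 0, x 1) * (Real.cos (x 2) * (Pi.single μ 1 : Fin 4 → ℝ) 2) := by
  rw [pd, ((hasF01 F hF x).fun_mul (hasFsin2 x)).fderiv]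
  simp [L01]
  ring

lemma hasFcos3 (x : Fin 4 → ℝ) :
    HasFDerivAt (fun y : Fin 4 → ℝ => Real.cos (y 3))
      ((-Real.sin (x 3)) • (ContinuousLinearMap.proj 3 : (Fin 4 → ℝ) →L[ℝ] ℝ)) x :=
  by have := (Real.hasDerivAt_cos (x 3)).comp_hasFDerivAt x (hasFproj 3 x); exact this

lemma hasFsin3 (x : Fin 4 → ℝ) :
    HasFDerivAt (fun y : Fin 4 → ℝ => Real.sin (y 3))
      (Real.cos (x 3) • (ContinuousLinearMap.proj 3 : (Fin 4 → ℝ) →L[ℝ] ℝ)) x :=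
  by have := (Real.hasDerivAt_sin (x 3)).comp_hasFDerivAt x (hasFproj 3 x); exact this

lemma pd_sin3 (μ : Fin 4) (x : Fin 4 → ℝ) :
    pd (fun y => Real.sin (y 3)) μ x = Real.cos (x 3) * (Pi.single μ 1 : Fin 4 → ℝ) 3 := by
  rw [pd, (hasFsin3 x).fderiv]
  simp

lemma pd_negcos3 (μ : Fin 4) (x : Fin 4 → ℝ) :
    pd (fun y => -Real.cos (y 3)) μ x = Real.sin (x 3) * (Pi.single μ 1 : Fin 4 → ℝ) 3 := by
  have h : HasFDerivAt (fun y : Fin 4 → ℝ => -Real.cos (y 3))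
      (-((-Real.sin (x 3)) • (ContinuousLinearMap.proj 3 : (Fin 4 → ℝ) →L[ℝ] ℝ))) x :=
    (hasFcos3 x).neg
  rw [pd, h.fderiv]
  simp

lemma hasFcot (x : Fin 4 → ℝ) (hx : Real.sin (x 2) ≠ 0) :
    HasFDerivAt (fun y : Fin 4 → ℝ => Real.cos (y 2) / Real.sin (y 2))
      ((-1 / Real.sin (x 2) ^ 2) • (ContinuousLinearMap.proj 2 : (Fin 4 → ℝ) →L[ℝ] ℝ)) x := by
  have h := ((Real.hasDerivAt_cos (x 2)).div (Real.hasDerivAt_sin (x 2)) hx).comp_hasFDerivAt x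
    (hasFproj 2 x)
  have := Real.sin_sq_add_cos_sq (x 2)
  rw [show (-1 / Real.sin (x 2) ^ 2) = (-Real.sin (x 2) * Real.sin (x 2) - Real.cos (x 2) * Real.cos (x 2)) / Real.sin (x 2) ^ 2 by rw [← this]; ring]
  exact h



lemma pd_cotcos (μ : Fin 4) (x : Fin 4 → ℝ) (hx : Real.sin (x 2) ≠ 0) :
    pd (fun y => Real.cos (y 2) / Real.sin (y 2) * Real.cos (y 3)) μ x
      = (-1 / Real.sin (x 2) ^ 2) * Real.cos (x 3) * (Pi.single μ 1 : Fin 4 → ℝ) 2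
        + (Real.cos (x 2) / Real.sin (x 2)) * (-Real.sin (x 3)) * (Pi.single μ 1 : Fin 4 → ℝ) 3 := by
  rw [pd, ((hasFcot x hx).fun_mul (hasFcos3 x)).fderiv]
  simp
  ring

lemma pd_cotsin (μ : Fin 4) (x : Fin 4 → ℝ) (hx : Real.sin (x 2) ≠ 0) :
    pd (fun y => Real.cos (y 2) / Real.sin (y 2) * Real.sin (y 3)) μ x
      = (-1 / Real.sin (x 2) ^ 2) * Real.sin (x 3) * (Pi.single μ 1 : Fin 4 → ℝ) 2
        + (Real.cos (x 2) / Real.sin (x 2)) * Real.cos (x 3) * (Pi.single μ 1 : Fin 4 → ℝ) 3 := by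
  rw [pd, ((hasFcot x hx).fun_mul (hasFsin3 x)).fderiv]
  simp
  ring




theorem stmt_17 (α β γ : ℝ × ℝ → ℝ)
    (hα : Differentiable ℝ α) (hβ : Differentiable ℝ β) (hγ : Differentiable ℝ γ) :
    ∀ (I : Fin 3) (a μ : Fin 4) (x : Fin 4 → ℝ), Real.sin (x 2) ≠ 0 →
      (∑ ν, XSO3 I x ν * pd (fun y => hSO3 α β γ y a μ) ν x)
        + (∑ ν, pd (fun y => XSO3 I y ν) μ x * hSO3 α β γ x a ν)
      = ∑ i, fSO3 I i x * ∑ b, lamSO3 i a b * hSO3 α β γ x b μ := by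
  intro I a μ x hx
  fin_cases I <;> fin_cases a <;> fin_cases μ <;>
    · simp only [XSO3, fSO3, lamSO3, hSO3, Fin.zero_eta, Fin.mk_one, Fin.reduceFinMk, Fin.sum_univ_three, Fin.sum_univ_four, Fin.isValue,
        Matrix.cons_val_zero, Matrix.cons_val_one, Matrix.head_cons, Matrix.cons_val_two,
        Matrix.cons_val_three, Matrix.tail_cons, Matrix.cons_val_fin_one, Matrix.head_fin_const]
      simp only [pd_const, pd01 α hα, pd01 β hβ, pd01 γ hγ, pd_gsin γ hγ, pd_sin3, pd_negcos3,
        pd_cotcos _ _ hx, pd_cotsin _ _ hx, Pi.single_apply, Fin.isValue, Fin.reduceEq, reduceIte, Prod.mk_zero_zero, map_zero]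
      norm_num
      try field_simp
      try ring
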